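/- Let q be a prime power, h and k integers with 3 ≤ h ≤ k, and D = {(x_1,...,x_k) ∈ GF(q)^k \ {0} : x_1 ⋯ x_h = 0}. For nonzero a ∈ GF(q)^k with Supp(a) ⊆ {1,...,h} and wt(a) = s, the codeword c_a = (⟨a,x⟩)_{x ∈ D} has Hamming weight (q-1) q^{k-h-1}(q^h - (q-1)^h) + (-1)^s q^{k-h-1}(q-1)^{h-s+1}; for nonzero a with Supp(a) ⊄ {1,...,h}, the weight is (q-1) q^{k-h-1}(q^h - (q-1)^h). -/

import Mathlib

open Finset
set_option linter.unusedSectionVars false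
set_option maxHeartbeats 1000000

section helpers
variable {F : Type} [Field F] [Fintype F] [DecidableEq F] {I : Type} [Fintype I] [DecidableEq I]

lemma sum_update (a x : I → F) (j : I) (v : F) :
    ∑ i, a i * Function.update x j v i = (∑ i ∈ univ.erase j, a i * x i) + a j * v := by
  rw [← Finset.add_sum_erase _ _ (mem_univ j), Function.update_self, add_comm]
  congr 1
  exact Finset.sum_congr rfl fun i hi => by
    rw [Function.update_of_ne (Finset.ne_of_mem_erase hi)]

lemma sum_as_erase (a x : I → F) (j : I) :
    ∑ i, a i * x i = (∑ i ∈ univ.erase j, a i * x i) + a j * x j := by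
  rw [← Finset.add_sum_erase _ _ (mem_univ j), add_comm]

lemma pivot_count (s : I → Finset F) (a : I → F) (j : I) (haj : a j ≠ 0) (hsj : s j = univ) :
    ((Fintype.piFinset s).filter (fun x => ∑ i, a i * x i = 0)).card
      = ∏ i ∈ univ.erase j, (s i).card := by
  have key : ((Fintype.piFinset s).filter (fun x => ∑ i, a i * x i = 0)).card
      = (Fintype.piFinset (Function.update s j ({0} : Finset F))).card := by
    apply Finset.card_nbij' (fun x => Function.update x j 0)
      (fun y => Function.update y j (-(∑ i, a i * y i) / a j))
    · intro x hx
      simp only [Finset.mem_coe, mem_filter, Fintype.mem_piFinset] at hx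
      simp only [Finset.mem_coe, Fintype.mem_piFinset]
      intro i
      rcases eq_or_ne i j with rfl | hij
      · simp [Function.update_self]
      · simp [Function.update_of_ne hij, hx.1 i]
    · intro y hy
      simp only [Finset.mem_coe, Fintype.mem_piFinset] at hy
      have hyj : y j = 0 := by have := hy j; simpa using this
      simp only [Finset.mem_coe, mem_filter, Fintype.mem_piFinset]
      refine ⟨fun i => ?_, ?_⟩
      · rcases eq_or_ne i j with rfl | hij
        · simp [Function.update_self, hsj]
        · simp only [Function.update_of_ne hij]
          have := hy i; simpa [Function.update_of_ne hij] using this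
      · rw [sum_update]
        have hs : ∑ i, a i * y i = ∑ i ∈ univ.erase j, a i * y i := by
          rw [sum_as_erase a y j, hyj, mul_zero, add_zero]
        rw [← hs]
        field_simp
        ring
    · intro x hx
      simp only [Finset.mem_coe, mem_filter, Fintype.mem_piFinset] at hx
      funext i
      rcases eq_or_ne i j with rfl | hij
      · simp only [Function.update_self]
        have h1 : ∑ i', a i' * Function.update x i 0 i' = ∑ i' ∈ univ.erase i, a i' * x i' := by
          rw [sum_update, mul_zero, add_zero]
        rw [h1]
        have h2 : ∑ i' ∈ univ.erase i, a i' * x i' = - (a i * x i) := by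
          have h3 := sum_as_erase a x i
          rw [hx.2] at h3
          linear_combination -h3
        rw [h2]
        field_simp
      · simp [Function.update_of_ne hij]
    · intro y hy
      simp only [Finset.mem_coe, Fintype.mem_piFinset] at hy
      funext i
      rcases eq_or_ne i j with rfl | hij
      · simp only [Function.update_self]
        have := hy i; exact (by simpa using this : y i = 0).symm
      · simp [Function.update_of_ne hij]
  rw [key, Fintype.card_piFinset]
  rw [← Finset.prod_erase_mul _ _ (mem_univ j)]
  simp only [Function.update_self, Finset.card_singleton, mul_one]
  exact Finset.prod_congr rfl fun i hi => by
    rw [Function.update_of_ne (Finset.ne_of_mem_erase hi)]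


lemma split_count (s : I → Finset F) (a : I → F) (S : Finset I) (hA : ∀ i, a i ≠ 0 → i ∈ S) :
    ((Fintype.piFinset s).filter (fun x => ∑ i, a i * x i = 0)).card
    = ((Fintype.piFinset (fun i => if i ∈ S then s i else {0})).filter
        (fun x => ∑ i, a i * x i = 0)).card * ∏ i ∈ Sᶜ, (s i).card := by
  have hsum : ∀ x : I → F, ∑ i, a i * (fun i => if i ∈ S then x i else 0) i = ∑ i, a i * x i := by
    intro x
    refine Finset.sum_congr rfl fun i _ => ?_
    by_cases hi : i ∈ S
    · simp [hi]
    · have hz : a i = 0 := by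
        by_contra hcon; exact hi (hA i hcon)
      simp [hi, hz]
  have hprod : (∏ i ∈ Sᶜ, (s i).card)
      = (Fintype.piFinset (fun i => if i ∈ S then ({0} : Finset F) else s i)).card := by
    rw [Fintype.card_piFinset]
    rw [← Finset.prod_compl_mul_prod S (fun i => (if i ∈ S then ({0} : Finset F) else s i).card)]
    have h1 : ∏ i ∈ Sᶜ, (if i ∈ S then ({0} : Finset F) else s i).card = ∏ i ∈ Sᶜ, (s i).card := by
      refine Finset.prod_congr rfl fun i hi => ?_
      rw [Finset.mem_compl] at hi
      simp [hi]
    have h2 : ∏ i ∈ S, (if i ∈ S then ({0} : Finset F) else s i).card = 1 := by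
      refine Finset.prod_eq_one fun i hi => by simp [hi]
    rw [h1, h2, mul_one]
  rw [hprod, ← Finset.card_product]
  apply Finset.card_nbij'
    (fun x => (fun i => if i ∈ S then x i else 0, fun i => if i ∈ S then 0 else x i))
    (fun p => fun i => p.1 i + p.2 i)
  · intro x hx
    simp only [Finset.mem_coe, mem_filter, Fintype.mem_piFinset] at hx
    simp only [Finset.mem_product, Finset.mem_coe, mem_filter, Fintype.mem_piFinset]
    refine ⟨⟨fun i => ?_, ?_⟩, fun i => ?_⟩
    · by_cases hi : i ∈ S
      · simp [hi, hx.1 i]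
      · simp [hi]
    · rw [hsum x, hx.2]
    · by_cases hi : i ∈ S
      · simp [hi]
      · simp [hi, hx.1 i]
  · intro p hp
    simp only [Finset.mem_product, Finset.mem_coe, mem_filter, Fintype.mem_piFinset] at hp
    obtain ⟨⟨hp1, hpe⟩, hp2⟩ := hp
    simp only [Finset.mem_coe, mem_filter, Fintype.mem_piFinset]
    have hz1 : ∀ i, i ∉ S → p.1 i = 0 := fun i hi => by
      have := hp1 i; simpa [hi] using this
    have hz2 : ∀ i, i ∈ S → p.2 i = 0 := fun i hi => by
      have := hp2 i; simpa [hi] using this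
    refine ⟨fun i => ?_, ?_⟩
    · by_cases hi : i ∈ S
      · have := hp1 i
        rw [if_pos hi] at this
        simpa [hz2 i hi] using this
      · have := hp2 i
        rw [if_neg hi] at this
        simpa [hz1 i hi] using this
    · have hsplit : ∑ i, a i * (p.1 i + p.2 i) = ∑ i, a i * p.1 i + ∑ i, a i * p.2 i := by
        rw [← Finset.sum_add_distrib]; exact Finset.sum_congr rfl fun i _ => by ring
      rw [hsplit, hpe]
      have hz : ∑ i, a i * p.2 i = 0 := by
        refine Finset.sum_eq_zero fun i _ => ?_
        by_cases hi : i ∈ S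
        · rw [hz2 i hi, mul_zero]
        · have hz : a i = 0 := by by_contra hcon; exact hi (hA i hcon)
          rw [hz, zero_mul]
      rw [hz, add_zero]
  · intro x hx
    funext i
    by_cases hi : i ∈ S <;> simp [hi]
  · intro p hp
    simp only [Finset.mem_product, Finset.mem_coe, mem_filter, Fintype.mem_piFinset] at hp
    obtain ⟨⟨hp1, hpe⟩, hp2⟩ := hp
    have hz1 : ∀ i, i ∉ S → p.1 i = 0 := fun i hi => by
      have := hp1 i; simpa [hi] using this
    have hz2 : ∀ i, i ∈ S → p.2 i = 0 := fun i hi => by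
      have := hp2 i; simpa [hi] using this
    ext i <;> by_cases hi : i ∈ S
    · simp [hi, hz2 i hi]
    · simp [hi, hz1 i hi]
    · simp [hi, hz2 i hi]
    · simp [hi, hz1 i hi]


lemma f_count (a : I → F) (S : Finset I) (hS : ∀ i ∈ S, a i ≠ 0) :
    (Fintype.card F : ℤ) * ((Fintype.piFinset
        (fun i => if i ∈ S then univ.erase (0:F) else {0})).filter
        (fun x => ∑ i, a i * x i = 0)).card
      = ((Fintype.card F : ℤ) - 1) ^ S.card
        + (-1) ^ S.card * ((Fintype.card F : ℤ) - 1) := by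
  classical
  induction S using Finset.induction_on with
  | empty =>
    have hfe : ((Fintype.piFinset (fun i : I => if i ∈ (∅ : Finset I) then univ.erase (0:F)
        else {0})).filter (fun x => ∑ i, a i * x i = 0))
        = Fintype.piFinset (fun _ : I => ({0} : Finset F)) := by
      simp only [Finset.notMem_empty, if_false]
      rw [Finset.filter_eq_self]
      intro x hx
      simp only [Fintype.mem_piFinset, Finset.mem_singleton] at hx
      exact Finset.sum_eq_zero fun i _ => by rw [hx i, mul_zero]
    rw [hfe, Fintype.card_piFinset]
    simp
  | insert j S0 hjS ih =>
    have haj : a j ≠ 0 := hS j (Finset.mem_insert_self j S0)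
    have hS0 : ∀ i ∈ S0, a i ≠ 0 := fun i hi => hS i (Finset.mem_insert_of_mem hi)
    have ih' := ih hS0
    have hq1 : 1 ≤ Fintype.card F := Fintype.card_pos
    -- bijection to the "sum nonzero" set over pattern S0
    have key : ((Fintype.piFinset (fun i => if i ∈ insert j S0 then univ.erase (0:F)
          else {0})).filter (fun x => ∑ i, a i * x i = 0)).card
        = ((Fintype.piFinset (fun i => if i ∈ S0 then univ.erase (0:F)
          else {0})).filter (fun x => ¬ (∑ i, a i * x i = 0))).card := by
      apply Finset.card_nbij' (fun x => Function.update x j 0)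
        (fun y => Function.update y j (-(∑ i, a i * y i) / a j))
      · intro x hx
        simp only [Finset.mem_coe, mem_filter, Fintype.mem_piFinset] at hx
        have hxj : x j ≠ 0 := by
          have := hx.1 j
          simp only [Finset.mem_insert_self, if_pos, Finset.mem_erase] at this
          exact this.1
        simp only [Finset.mem_coe, mem_filter, Fintype.mem_piFinset]
        refine ⟨fun i => ?_, ?_⟩
        · rcases eq_or_ne i j with rfl | hij
          · simp [hjS]
          · have := hx.1 i
            rw [if_congr (show (i ∈ insert j S0) ↔ i ∈ S0 by simp [Finset.mem_insert, hij]) rfl rfl] at this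
            simpa [Function.update_of_ne hij] using this
        · have h1 : ∑ i, a i * Function.update x j 0 i = ∑ i ∈ univ.erase j, a i * x i := by
            rw [sum_update, mul_zero, add_zero]
          have h2 : ∑ i ∈ univ.erase j, a i * x i = -(a j * x j) := by
            have h3 := sum_as_erase a x j
            rw [hx.2] at h3
            linear_combination -h3
          rw [h1, h2]
          exact neg_ne_zero.mpr (mul_ne_zero haj hxj)
      · intro y hy
        simp only [Finset.mem_coe, mem_filter, Fintype.mem_piFinset] at hy
        have hyj : y j = 0 := by
          have := hy.1 j
          simpa [hjS] using this
        have hsy : ∑ i, a i * y i ≠ 0 := hy.2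
        have hv : -(∑ i, a i * y i) / a j ≠ 0 :=
          div_ne_zero (neg_ne_zero.mpr hsy) haj
        simp only [Finset.mem_coe, mem_filter, Fintype.mem_piFinset]
        refine ⟨fun i => ?_, ?_⟩
        · rcases eq_or_ne i j with rfl | hij
          · simp [Function.update_self, hv]
          · have := hy.1 i
            rw [Function.update_of_ne hij,
              if_congr (show (i ∈ insert j S0) ↔ i ∈ S0 by simp [Finset.mem_insert, hij]) rfl rfl]
            exact this
        · rw [sum_update]
          have hs : ∑ i, a i * y i = ∑ i ∈ univ.erase j, a i * y i := by
            rw [sum_as_erase a y j, hyj, mul_zero, add_zero]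
          rw [← hs]
          field_simp
          ring
      · intro x hx
        simp only [Finset.mem_coe, mem_filter, Fintype.mem_piFinset] at hx
        funext i
        rcases eq_or_ne i j with rfl | hij
        · simp only [Function.update_self]
          have h1 : ∑ i', a i' * Function.update x i 0 i' = ∑ i' ∈ univ.erase i, a i' * x i' := by
            rw [sum_update, mul_zero, add_zero]
          rw [h1]
          have h2 : ∑ i' ∈ univ.erase i, a i' * x i' = -(a i * x i) := by
            have h3 := sum_as_erase a x i
            rw [hx.2] at h3
            linear_combination -h3
          rw [h2]
          field_simp
        · simp [Function.update_of_ne hij]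
      · intro y hy
        simp only [Finset.mem_coe, mem_filter, Fintype.mem_piFinset] at hy
        have hyj : y j = 0 := by
          have := hy.1 j
          simpa [hjS] using this
        funext i
        rcases eq_or_ne i j with rfl | hij
        · simp [Function.update_self, hyj]
        · simp [Function.update_of_ne hij]
    have htot : ((Fintype.piFinset (fun i => if i ∈ S0 then univ.erase (0:F)
          else {0})).filter (fun x => ∑ i, a i * x i = 0)).card
        + ((Fintype.piFinset (fun i => if i ∈ S0 then univ.erase (0:F)
          else {0})).filter (fun x => ¬ (∑ i, a i * x i = 0))).card
        = (Fintype.card F - 1) ^ S0.card := by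
      rw [Finset.card_filter_add_card_filter_not, Fintype.card_piFinset]
      have hcard : ∀ i : I, (if i ∈ S0 then (univ.erase (0:F)) else ({0} : Finset F)).card
          = if i ∈ S0 then Fintype.card F - 1 else 1 := by
        intro i
        by_cases hi : i ∈ S0 <;> simp [hi, Finset.card_erase_of_mem, Finset.card_univ]
      calc ∏ i, (if i ∈ S0 then (univ.erase (0:F)) else ({0} : Finset F)).card
          = ∏ i, (if i ∈ S0 then Fintype.card F - 1 else 1) :=
            Finset.prod_congr rfl (fun i _ => hcard i)
        _ = ∏ i ∈ univ ∩ S0, (Fintype.card F - 1) := Finset.prod_ite_mem univ S0 _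
        _ = (Fintype.card F - 1) ^ S0.card := by rw [Finset.univ_inter, Finset.prod_const]
    have hcast : ((Fintype.card F - 1 : ℕ) : ℤ) = (Fintype.card F : ℤ) - 1 := by
      rw [Nat.cast_sub hq1, Nat.cast_one]
    have hcards : Finset.card (insert j S0) = S0.card + 1 := Finset.card_insert_of_notMem hjS
    rw [key, hcards]
    have htotZ : (((Fintype.piFinset (fun i => if i ∈ S0 then univ.erase (0:F)
          else {0})).filter (fun x => ¬ (∑ i, a i * x i = 0))).card : ℤ)
        = ((Fintype.card F : ℤ) - 1) ^ S0.card
          - (((Fintype.piFinset (fun i => if i ∈ S0 then univ.erase (0:F)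
          else {0})).filter (fun x => ∑ i, a i * x i = 0)).card : ℤ) := by
      have := htot
      have hz : (((Fintype.piFinset (fun i => if i ∈ S0 then univ.erase (0:F)
          else {0})).filter (fun x => ∑ i, a i * x i = 0)).card : ℤ)
          + (((Fintype.piFinset (fun i => if i ∈ S0 then univ.erase (0:F)
          else {0})).filter (fun x => ¬ (∑ i, a i * x i = 0))).card : ℤ)
          = ((Fintype.card F - 1 : ℕ) : ℤ) ^ S0.card := by
        exact_mod_cast congrArg (Nat.cast : ℕ → ℤ) this
      rw [hcast] at hz
      linarith
    rw [htotZ]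
    rw [mul_sub, ih']
    ring

lemma pivot_count' (s : I → Finset F) (a : I → F) (j : I) (haj : a j ≠ 0) (hsj : s j = univ) :
    Fintype.card F * ((Fintype.piFinset s).filter (fun x => ∑ i, a i * x i = 0)).card
      = ∏ i, (s i).card := by
  rw [pivot_count s a j haj hsj, ← Finset.mul_prod_erase univ _ (mem_univ j), hsj,
    Finset.card_univ]

end helpers




lemma card_filter_and_split {A : Type} [Fintype A] (p q : A → Prop)
    [DecidablePred p] [DecidablePred q] :
    (univ.filter (fun x => p x ∧ q x)).card
      + (univ.filter (fun x => p x ∧ ¬ q x)).card = (univ.filter p).card := by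
  rw [← Finset.filter_filter, ← Finset.filter_filter]
  exact Finset.card_filter_add_card_filter_not _

theorem stmt_12 {F : Type} [Field F] [Fintype F] [DecidableEq F]
    (q h k : ℕ) (hq : Fintype.card F = q) (hh : 3 ≤ h) (hk : h ≤ k)
    (a : Fin k → F) (ha : a ≠ 0) :
    ((∀ i : Fin k, a i ≠ 0 → (i : ℕ) < h) →
      (Set.ncard {x : Fin k → F | (x ≠ 0 ∧
          (∏ i ∈ Finset.univ.filter (fun i : Fin k => (i : ℕ) < h), x i) = 0) ∧
          ∑ i, a i * x i ≠ 0} : ℚ) =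
        ((q : ℚ) - 1) * (q : ℚ) ^ ((k : ℤ) - h - 1) * ((q : ℚ) ^ h - ((q : ℚ) - 1) ^ h)
          + (-1) ^ ((Finset.univ.filter (fun i : Fin k => a i ≠ 0)).card)
            * (q : ℚ) ^ ((k : ℤ) - h - 1)
            * ((q : ℚ) - 1) ^ (h - (Finset.univ.filter (fun i : Fin k => a i ≠ 0)).card + 1))
    ∧ (¬ (∀ i : Fin k, a i ≠ 0 → (i : ℕ) < h) →
      (Set.ncard {x : Fin k → F | (x ≠ 0 ∧
          (∏ i ∈ Finset.univ.filter (fun i : Fin k => (i : ℕ) < h), x i) = 0) ∧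
          ∑ i, a i * x i ≠ 0} : ℚ) =
        ((q : ℚ) - 1) * (q : ℚ) ^ ((k : ℤ) - h - 1)
          * ((q : ℚ) ^ h - ((q : ℚ) - 1) ^ h)) := by
  classical
  subst hq
  obtain ⟨m, rfl⟩ := Nat.exists_eq_add_of_le hk
  set qn : ℕ := Fintype.card F with hqn
  have hq1 : 1 ≤ qn := Fintype.card_pos
  have hqQ : (qn : ℚ) ≠ 0 := by positivity
  obtain ⟨j0, hj0⟩ : ∃ j, a j ≠ 0 := by
    by_contra hcon
    push_neg at hcon
    exact ha (funext fun i => hcon i)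
  set Hfil : Finset (Fin (h+m)) := Finset.univ.filter (fun i : Fin (h+m) => (i : ℕ) < h)
    with hHfil
  set sT : Fin (h+m) → Finset F :=
    (fun i => if (i : ℕ) < h then univ.erase (0:F) else univ) with hsT
  have hHc1 : Hfil.card = h := by
    have heq : Hfil = (univ : Finset (Fin h)).map
        ⟨Fin.castLE (Nat.le_add_right h m), Fin.castLE_injective _⟩ := by
      ext i
      simp only [hHfil, mem_filter, mem_univ, true_and, Finset.mem_map,
        Function.Embedding.coeFn_mk]
      constructor
      · intro hi
        exact ⟨⟨(i:ℕ), hi⟩, by ext; simp⟩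
      · rintro ⟨jj, -, rfl⟩
        exact jj.2
    rw [heq, Finset.card_map, Finset.card_univ, Fintype.card_fin]
  have hHc2 : (univ.filter (fun i : Fin (h+m) => ¬ ((i : ℕ) < h))).card = m := by
    have htmp := Finset.card_filter_add_card_filter_not
      (s := (univ : Finset (Fin (h+m)))) (p := fun i : Fin (h+m) => (i : ℕ) < h)
    rw [Finset.card_univ, Fintype.card_fin] at htmp
    rw [← hHfil] at htmp
    omega
  have hmemT : ∀ x : Fin (h+m) → F,
      x ∈ Fintype.piFinset sT ↔ ∀ i : Fin (h+m), (i : ℕ) < h → x i ≠ 0 := by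
    intro x
    simp only [Fintype.mem_piFinset, hsT]
    constructor
    · intro hx i hi
      have := hx i
      rw [if_pos hi] at this
      exact (Finset.mem_erase.mp this).1
    · intro hx i
      by_cases hi : (i : ℕ) < h
      · rw [if_pos hi]
        exact Finset.mem_erase.mpr ⟨hx i hi, Finset.mem_univ _⟩
      · rw [if_neg hi]
        exact Finset.mem_univ _
  have hprodne : ∀ x : Fin (h+m) → F,
      ((∏ i ∈ Hfil, x i) ≠ 0) ↔ ∀ i : Fin (h+m), (i : ℕ) < h → x i ≠ 0 := by
    intro x
    rw [Finset.prod_ne_zero_iff]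
    constructor
    · intro hx i hi
      exact hx i (by simp [hHfil, hi])
    · intro hx i hi
      exact hx i (by simpa [hHfil] using hi)
  have hprodT : ∏ i, (sT i).card = (qn - 1) ^ h * qn ^ m := by
    have hcongr : ∀ i : Fin (h+m), (sT i).card = if (i : ℕ) < h then qn - 1 else qn := by
      intro i
      by_cases hi : (i : ℕ) < h <;>
        simp [hsT, hi, Finset.card_erase_of_mem, Finset.card_univ, hqn]
    calc ∏ i : Fin (h+m), (sT i).card
        = ∏ i : Fin (h+m), (if (i : ℕ) < h then qn - 1 else qn) :=
          Finset.prod_congr rfl fun i _ => hcongr i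
      _ = (qn - 1) ^ h * qn ^ m := by
          rw [Finset.prod_ite, Finset.prod_const, Finset.prod_const, ← hHfil, hHc1, hHc2]
  set Dset : Finset (Fin (h+m) → F) :=
    univ.filter (fun x => (∏ i ∈ Hfil, x i) = 0 ∧ ∑ i, a i * x i ≠ 0) with hDset
  set Tset : Finset (Fin (h+m) → F) :=
    (Fintype.piFinset sT).filter (fun x => ∑ i, a i * x i = 0) with hTset
  have hncard : (Set.ncard {x : Fin (h+m) → F | (x ≠ 0 ∧
      (∏ i ∈ Hfil, x i) = 0) ∧ ∑ i, a i * x i ≠ 0}) = Dset.card := by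
    have hset : {x : Fin (h+m) → F | (x ≠ 0 ∧
        (∏ i ∈ Hfil, x i) = 0) ∧ ∑ i, a i * x i ≠ 0} = (↑Dset : Set (Fin (h+m) → F)) := by
      ext x
      simp only [Set.mem_setOf_eq, hDset, Finset.coe_filter, Set.mem_setOf_eq,
        mem_univ, true_and]
      constructor
      · rintro ⟨⟨-, hP⟩, hQ⟩
        exact ⟨hP, hQ⟩
      · rintro ⟨hP, hQ⟩
        refine ⟨⟨fun h0 => hQ ?_, hP⟩, hQ⟩
        rw [h0]
        simp
    rw [hset, Set.ncard_coe_finset]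
  -- counting relations
  have e1n : (univ.filter (fun x : Fin (h+m) → F =>
        (∏ i ∈ Hfil, x i) = 0 ∧ ∑ i, a i * x i = 0)).card + Dset.card
      = (univ.filter (fun x : Fin (h+m) → F => (∏ i ∈ Hfil, x i) = 0)).card := by
    rw [hDset]
    exact card_filter_and_split _ _
  have e2n : (univ.filter (fun x : Fin (h+m) → F =>
        (∏ i ∈ Hfil, x i) = 0 ∧ ∑ i, a i * x i = 0)).card + Tset.card
      = (univ.filter (fun x : Fin (h+m) → F => ∑ i, a i * x i = 0)).card := by
    have hb : univ.filter (fun x : Fin (h+m) → F =>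
          (∑ i, a i * x i = 0) ∧ (∏ i ∈ Hfil, x i) = 0)
        = univ.filter (fun x : Fin (h+m) → F =>
          (∏ i ∈ Hfil, x i) = 0 ∧ ∑ i, a i * x i = 0) := by
      ext x
      simp [and_comm]
    have ht : univ.filter (fun x : Fin (h+m) → F =>
          (∑ i, a i * x i = 0) ∧ ¬ ((∏ i ∈ Hfil, x i) = 0))
        = Tset := by
      ext x
      simp only [mem_filter, mem_univ, true_and, hTset, hmemT x]
      rw [← hprodne x]
      tauto
    have := card_filter_and_split (A := Fin (h+m) → F)
      (fun x => ∑ i, a i * x i = 0) (fun x => (∏ i ∈ Hfil, x i) = 0)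
    rw [hb, ht] at this
    exact this
  have e3n : (univ.filter (fun x : Fin (h+m) → F => (∏ i ∈ Hfil, x i) = 0)).card
      + (qn - 1) ^ h * qn ^ m = qn ^ (h + m) := by
    have hc : univ.filter (fun x : Fin (h+m) → F => ¬ ((∏ i ∈ Hfil, x i) = 0))
        = Fintype.piFinset sT := by
      ext x
      simp only [mem_filter, mem_univ, true_and, hmemT x]
      exact hprodne x
    have htmp := Finset.card_filter_add_card_filter_not
      (s := (univ : Finset (Fin (h+m) → F)))
      (p := fun x : Fin (h+m) → F => (∏ i ∈ Hfil, x i) = 0)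
    rw [hc, Fintype.card_piFinset, hprodT, Finset.card_univ, Fintype.card_fun,
      Fintype.card_fin] at htmp
    exact htmp
  have e4n : qn * (univ.filter (fun x : Fin (h+m) → F => ∑ i, a i * x i = 0)).card
      = qn ^ (h + m) := by
    have htmp := pivot_count' (fun _ : Fin (h+m) => (univ : Finset F)) a j0 hj0 rfl
    rw [Fintype.piFinset_univ] at htmp
    rw [htmp, Finset.prod_const, Finset.card_univ, Finset.card_univ, Fintype.card_fin]
  -- cast to ℚ
  have e1 : ((univ.filter (fun x : Fin (h+m) → F =>
        (∏ i ∈ Hfil, x i) = 0 ∧ ∑ i, a i * x i = 0)).card : ℚ) + Dset.card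
      = ((univ.filter (fun x : Fin (h+m) → F => (∏ i ∈ Hfil, x i) = 0)).card : ℚ) := by
    exact_mod_cast congrArg (Nat.cast : ℕ → ℚ) e1n
  have e2 : ((univ.filter (fun x : Fin (h+m) → F =>
        (∏ i ∈ Hfil, x i) = 0 ∧ ∑ i, a i * x i = 0)).card : ℚ) + Tset.card
      = ((univ.filter (fun x : Fin (h+m) → F => ∑ i, a i * x i = 0)).card : ℚ) := by
    exact_mod_cast congrArg (Nat.cast : ℕ → ℚ) e2n
  have e3 : ((univ.filter (fun x : Fin (h+m) → F => (∏ i ∈ Hfil, x i) = 0)).card : ℚ)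
      + ((qn : ℚ) - 1) ^ h * (qn : ℚ) ^ m = (qn : ℚ) ^ (h + m) := by
    have := congrArg (Nat.cast : ℕ → ℚ) e3n
    push_cast [Nat.cast_sub hq1] at this
    push_cast
    linarith
  have e4 : (qn : ℚ) * ((univ.filter (fun x : Fin (h+m) → F =>
        ∑ i, a i * x i = 0)).card : ℚ) = (qn : ℚ) ^ (h + m) := by
    exact_mod_cast congrArg (Nat.cast : ℕ → ℚ) e4n
  -- exponent rewriting
  have hz : (qn:ℚ) ^ (((h+m : ℕ) : ℤ) - (h:ℤ) - 1) = (qn:ℚ) ^ m * ((qn:ℚ))⁻¹ := by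
    have he : ((h+m : ℕ) : ℤ) - (h:ℤ) - 1 = (m : ℤ) - 1 := by push_cast; ring
    rw [he, zpow_sub_one₀ hqQ, zpow_natCast]
  constructor
  · -- case 1 : support inside the first h coordinates
    intro hcase
    set suppA : Finset (Fin (h+m)) := Finset.univ.filter (fun i : Fin (h+m) => a i ≠ 0)
      with hsuppA
    set sc : ℕ := suppA.card with hsc
    have hsub : suppA ⊆ Hfil := by
      intro i hi
      rw [hsuppA, mem_filter] at hi
      rw [hHfil, mem_filter]
      exact ⟨mem_univ _, hcase i hi.2⟩
    have hsh : sc ≤ h := hHc1 ▸ Finset.card_le_card hsub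
    obtain ⟨t, ht⟩ : ∃ t, h = sc + t := ⟨h - sc, (Nat.add_sub_cancel' hsh).symm⟩
    -- compute Tset.card
    have hsplit := split_count sT a suppA (fun i hi => by
      rw [hsuppA, mem_filter]; exact ⟨mem_univ _, hi⟩)
    have hpat : (fun i => if i ∈ suppA then sT i else ({0} : Finset F))
        = (fun i => if i ∈ suppA then univ.erase (0:F) else ({0} : Finset F)) := by
      funext i
      by_cases hi : i ∈ suppA
      · have hia : a i ≠ 0 := by
          rw [hsuppA, mem_filter] at hi; exact hi.2
        have : (i : ℕ) < h := hcase i hia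
        simp [hi, hsT, this]
      · simp [hi]
    rw [hpat] at hsplit
    have hf := f_count a suppA (fun i hi => by
      rw [hsuppA, mem_filter] at hi; exact hi.2)
    have hprodc : ∏ i ∈ suppAᶜ, (sT i).card = (qn - 1) ^ t * qn ^ m := by
      have hcongr : ∀ i ∈ suppAᶜ, (sT i).card = if (i : ℕ) < h then qn - 1 else qn := by
        intro i _
        by_cases hi : (i : ℕ) < h <;>
          simp [hsT, hi, Finset.card_erase_of_mem, Finset.card_univ, hqn]
      have hc1 : (suppAᶜ.filter (fun i : Fin (h+m) => (i : ℕ) < h)).card = t := by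
        have hsd : suppAᶜ.filter (fun i : Fin (h+m) => (i : ℕ) < h) = Hfil \ suppA := by
          ext i
          simp only [mem_filter, Finset.mem_compl, Finset.mem_sdiff, hHfil, mem_univ, true_and]
          tauto
        rw [hsd, Finset.card_sdiff_of_subset hsub, hHc1, ← hsc, ht, Nat.add_sub_cancel_left]
      have hc2 : (suppAᶜ.filter (fun i : Fin (h+m) => ¬ ((i : ℕ) < h))).card = m := by
        have hsd : suppAᶜ.filter (fun i : Fin (h+m) => ¬ ((i : ℕ) < h))
            = univ.filter (fun i : Fin (h+m) => ¬ ((i : ℕ) < h)) := by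
          ext i
          simp only [mem_filter, Finset.mem_compl, mem_univ, true_and]
          constructor
          · exact fun hx => hx.2
          · intro hx
            refine ⟨fun hmem => ?_, hx⟩
            rw [hsuppA, mem_filter] at hmem
            exact hx (hcase i hmem.2)
        rw [hsd, hHc2]
      calc ∏ i ∈ suppAᶜ, (sT i).card
          = ∏ i ∈ suppAᶜ, (if (i : ℕ) < h then qn - 1 else qn) :=
            Finset.prod_congr rfl hcongr
        _ = (qn - 1) ^ t * qn ^ m := by
            rw [Finset.prod_ite, Finset.prod_const, Finset.prod_const, hc1, hc2]
    -- assemble T in ℚ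
    have e5 : (qn : ℚ) * (Tset.card : ℚ)
        = (((qn:ℚ) - 1) ^ sc + (-1) ^ sc * ((qn:ℚ) - 1)) * ((qn:ℚ) - 1) ^ t * (qn:ℚ) ^ m := by
      have hTn : (Tset.card : ℚ)
          = ((((Fintype.piFinset (fun i => if i ∈ suppA then univ.erase (0:F)
              else ({0} : Finset F))).filter (fun x => ∑ i, a i * x i = 0)).card : ℚ))
            * (((qn - 1) ^ t * qn ^ m : ℕ) : ℚ) := by
        rw [hTset]
        exact_mod_cast congrArg (Nat.cast : ℕ → ℚ) (by rw [hsplit, hprodc])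
      have hfQ : (qn : ℚ) * (((Fintype.piFinset (fun i => if i ∈ suppA then univ.erase (0:F)
            else ({0} : Finset F))).filter (fun x => ∑ i, a i * x i = 0)).card : ℚ)
          = ((qn:ℚ) - 1) ^ sc + (-1) ^ sc * ((qn:ℚ) - 1) := by
        have := congrArg (Int.cast : ℤ → ℚ) hf
        push_cast at this
        rw [← hsc] at this
        convert this using 2
      rw [hTn]
      push_cast [Nat.cast_sub hq1]
      calc (qn:ℚ) * ((((Fintype.piFinset (fun i => if i ∈ suppA then univ.erase (0:F)
              else ({0} : Finset F))).filter (fun x => ∑ i, a i * x i = 0)).card : ℚ)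
            * (((qn:ℚ) - 1) ^ t * (qn:ℚ) ^ m))
          = ((qn : ℚ) * (((Fintype.piFinset (fun i => if i ∈ suppA then univ.erase (0:F)
              else ({0} : Finset F))).filter (fun x => ∑ i, a i * x i = 0)).card : ℚ))
            * (((qn:ℚ) - 1) ^ t * (qn:ℚ) ^ m) := by ring
        _ = (((qn:ℚ) - 1) ^ sc + (-1) ^ sc * ((qn:ℚ) - 1)) * ((qn:ℚ) - 1) ^ t * (qn:ℚ) ^ m := by
            rw [hfQ]; ring
    -- final computation
    have hp1 : (qn:ℚ)^h = (qn:ℚ)^sc*(qn:ℚ)^t := by rw [ht]; ring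
    have hp2 : ((qn:ℚ)-1)^h = ((qn:ℚ)-1)^sc*((qn:ℚ)-1)^t := by rw [ht]; ring
    have hp3 : (qn:ℚ)^(h+m) = (qn:ℚ)^sc*(qn:ℚ)^t*(qn:ℚ)^m := by rw [ht]; ring
    rw [hp3] at e3 e4
    rw [hp2] at e3
    rw [hncard]
    rw [show h - sc + 1 = t + 1 from by rw [ht, Nat.add_sub_cancel_left]]
    rw [hz, hp1, hp2]
    field_simp
    linear_combination (qn:ℚ) * e1 - (qn:ℚ) * e2 + (qn:ℚ) * e3 - e4 + e5
  · -- case 2 : some support coordinate outside the first h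
    intro hcase
    push_neg at hcase
    obtain ⟨j, hja, hjh⟩ := hcase
    have hT2 : (qn : ℚ) * (Tset.card : ℚ) = ((qn:ℚ) - 1) ^ h * (qn:ℚ) ^ m := by
      have htmp := pivot_count' sT a j hja (by rw [hsT]; simp [hjh])
      rw [hprodT] at htmp
      have := congrArg (Nat.cast : ℕ → ℚ) htmp
      push_cast [Nat.cast_sub hq1] at this
      rw [hTset]
      exact_mod_cast this
    rw [hncard, hz]
    field_simp
    linear_combination (qn:ℚ) * e1 - (qn:ℚ) * e2 + (qn:ℚ) * e3 - e4 + hT2
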